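/- Let p be a prime, V a finite p-group, and X a finite group acting faithfully on V such that every normal p-subgroup of X is trivial (O_p(X) = 1). Let A ≤ X be an elementary abelian p-subgroup of order at least p² with the property that C_V(A) = C_V(a) for every nonidentity a ∈ A. Then A centralizes every subgroup F of X of order prime to p which A normalizes: [F,A] = 1. -/

import Mathlib

section Helpers

variable {G : Type*} [Group G]

lemma pow_comm_apply {H : Type*} [Group H] (e : G ≃* G) (f : H ≃* H) (π : G → H)
    (h : ∀ g, f (π g) = π (e g)) : ∀ (k : ℕ) (g : G), (f ^ k) (π g) = π ((e ^ k) g) := by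
  intro k
  induction k with
  | zero => intro g; simp
  | succ k ih =>
    intro g
    rw [pow_succ, pow_succ, MulAut.mul_apply, MulAut.mul_apply, h, ih]

lemma mulequiv_pow_iterate (e : G ≃* G) (k : ℕ) : ∀ v : G, (e ^ k) v = (⇑e)^[k] v := by
  induction k with
  | zero => intro v; simp
  | succ k ih =>
    intro v
    rw [pow_succ, MulAut.mul_apply, Function.iterate_succ_apply, ih]

lemma pgroup_coprime_eq_one {p : ℕ} (hp : p.Prime) (hG : IsPGroup p G) {x : G} {m : ℕ}
    (hm : Nat.Coprime m p) (hx : x ^ m = 1) : x = 1 := by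
  obtain ⟨k, hk⟩ := hG x
  have h1 : orderOf x ∣ m := orderOf_dvd_of_pow_eq_one hx
  have h2 : orderOf x ∣ p ^ k := orderOf_dvd_of_pow_eq_one hk
  obtain ⟨j, hj, hje⟩ := (Nat.dvd_prime_pow hp).mp h2
  have hc : Nat.Coprime (orderOf x) p := Nat.Coprime.coprime_dvd_left h1 hm
  rcases Nat.eq_zero_or_pos j with rfl | hjpos
  · simpa [pow_zero, orderOf_eq_one_iff] using hje
  · exfalso
    have : p ∣ orderOf x := hje ▸ dvd_pow_self p hjpos.ne'
    have hp1 : p ∣ 1 := hc ▸ Nat.dvd_gcd this dvd_rfl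
    exact hp.one_lt.ne' (Nat.dvd_one.mp hp1)

def resAut (e : G ≃* G) (H : Subgroup G) (h : ∀ v ∈ H, e v ∈ H)
    (h' : ∀ v ∈ H, e.symm v ∈ H) : ↥H ≃* ↥H where
  toFun x := ⟨e x, h x x.2⟩
  invFun x := ⟨e.symm x, h' x x.2⟩
  left_inv x := Subtype.ext (e.symm_apply_apply x)
  right_inv x := Subtype.ext (e.apply_symm_apply x)
  map_mul' x y := Subtype.ext (map_mul e (x : G) (y : G))

@[simp] lemma resAut_coe (e : G ≃* G) (H : Subgroup G) (h h') (x : ↥H) :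
    ((resAut e H h h' x : ↥H) : G) = e x := rfl

lemma resAut_pow_coe (e : G ≃* G) (H : Subgroup G) (h h') (k : ℕ) (x : ↥H) :
    (((resAut e H h h') ^ k) x : G) = (e ^ k) x :=
  (pow_comm_apply (resAut e H h h') e (fun y : ↥H => (y : G)) (fun _ => rfl) k x).symm

end Helpers


section Counting

lemma iterate_mod_p {S : Type*} (f : S → S) {p : ℕ} (hf : f^[p] = id) (m : ℕ) (x : S) :
    f^[m % p] x = f^[m] x := by
  conv_rhs => rw [← Nat.mod_add_div m p]
  rw [Function.iterate_add_apply, Function.iterate_mul, hf, Function.iterate_id, id_eq]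

lemma counting_aux {p : ℕ} (hp : p.Prime) {S : Type*} [Finite S] (f : S → S)
    (hf : f^[p] = id) : Nat.card S ≡ Nat.card {x : S // f x = x} [MOD p] := by
  haveI : Fact p.Prime := ⟨hp⟩
  haveI : NeZero p := ⟨hp.ne_zero⟩
  letI : MulAction (Multiplicative (ZMod p)) S :=
    { smul := fun g x => f^[(Multiplicative.toAdd g).val] x
      one_smul := fun x => by
        show f^[(Multiplicative.toAdd (1 : Multiplicative (ZMod p))).val] x = x
        simp [toAdd_one, ZMod.val_zero]
      mul_smul := fun g h x => by
        show f^[(Multiplicative.toAdd (g * h)).val] x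
            = f^[(Multiplicative.toAdd g).val] (f^[(Multiplicative.toAdd h).val] x)
        rw [toAdd_mul, ZMod.val_add, iterate_mod_p f hf, Function.iterate_add_apply] }
  have hPG : IsPGroup p (Multiplicative (ZMod p)) := by
    apply IsPGroup.of_card (n := 1)
    rw [Nat.card_eq_fintype_card]
    simp [ZMod.card p, pow_one]
  have hmod := hPG.card_modEq_card_fixedPoints S
  have hval1 : ((1 : ZMod p)).val = 1 := ZMod.val_one p
  have heq : Nat.card (MulAction.fixedPoints (Multiplicative (ZMod p)) S)
      = Nat.card {x : S // f x = x} := by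
    apply Nat.card_congr
    apply Equiv.subtypeEquivRight
    intro x
    constructor
    · intro hx
      have := hx (Multiplicative.ofAdd (1 : ZMod p))
      show f x = x
      have h1 : f^[((1 : ZMod p)).val] x = x := this
      rwa [hval1, Function.iterate_one] at h1
    · intro hx g
      show f^[(Multiplicative.toAdd g).val] x = x
      exact Function.iterate_fixed hx _
  rwa [heq] at hmod

lemma fixedpoint_aux {p : ℕ} (hp : p.Prime) {S : Type*} [Finite S] (f : S → S)
    (hf : f^[p] = id) (hcard : ¬ p ∣ Nat.card S) : ∃ x, f x = x := by
  have h := counting_aux hp f hf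
  have : Nat.card {x : S // f x = x} ≠ 0 := by
    intro h0
    rw [h0] at h
    exact hcard ((Nat.modEq_zero_iff_dvd).mp h)
  obtain ⟨⟨x, hx⟩⟩ := Nat.card_pos_iff.mp (Nat.pos_of_ne_zero this) |>.1
  exact ⟨x, hx⟩

end Counting

universe u

lemma PQ {p : ℕ} (hp : p.Prime) :
    ∀ (n : ℕ) (V : Type u) [Group V] [Finite V], Nat.card V ≤ n →
      IsPGroup p V → ∀ (α γ : MulAut V), α ^ p = 1 → Nat.Coprime (orderOf γ) p →
      Commute α γ → (∀ v, α v = v → γ v = v) → ∀ v, γ v = v := by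
  haveI : Fact p.Prime := ⟨hp⟩
  intro n
  induction n with
  | zero =>
    intro V _ _ hcard
    exact absurd hcard (by have := Nat.card_pos (α := V); omega)
  | succ n ih =>
    intro V instG instF hcard hV α γ hα hγcop hcomm hfix
    have happly : ∀ (δ ε : MulAut V), δ * ε = ε * δ → ∀ v, δ (ε v) = ε (δ v) := by
      intro δ ε h v
      have := congrArg (fun e : MulAut V => e v) h
      simpa [MulAut.mul_apply] using this
    have hcm : ∀ v : V, α (γ v) = γ (α v) := happly α γ hcomm
    set m := orderOf γ with hmdef
    have hm0 : m ≠ 0 := by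
      intro h
      rw [h] at hγcop
      exact hp.one_lt.ne' (Nat.coprime_zero_left p |>.mp hγcop)
    have hγm : γ ^ m = 1 := pow_orderOf_eq_one γ
    have hγmv : ∀ v : V, (γ ^ m) v = v := by intro v; rw [hγm]; rfl
    have hαv : ∀ v : V, (α ^ p) v = v := by intro v; rw [hα]; rfl
    by_cases hαtriv : ∀ w, α w = w
    · exact fun v => hfix v (hαtriv v)
    push_neg at hαtriv
    obtain ⟨w0, hw0⟩ := hαtriv
    haveI : Nontrivial V := nontrivial_of_ne (α w0) w0 hw0
    obtain ⟨nV, hnV⟩ := IsPGroup.iff_card.mp hV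
    by_cases habel : ∀ x y : V, x * y = y * x
    · -- abelian case
      letI : CommGroup V := { instG with mul_comm := habel }
      set πh : V →* V := ∏ k ∈ Finset.range m, ((γ ^ k : MulAut V) : V →* V) with hπhdef
      have hπ : ∀ v, πh v = ∏ k ∈ Finset.range m, (γ ^ k) v := by
        intro v
        rw [hπhdef, MonoidHom.finset_prod_apply]
        rfl
      have hshift : ∀ v : V, ∏ k ∈ Finset.range m, (γ ^ (k + 1)) v
          = ∏ k ∈ Finset.range m, (γ ^ k) v := by
        intro v
        have h1 := Finset.prod_range_succ' (fun k => (γ ^ k) v) m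
        have h2 := Finset.prod_range_succ (fun k => (γ ^ k) v) m
        have h0 : (γ ^ m) v = (γ ^ 0) v := by rw [hγmv]; simp
        rw [h2, h0] at h1
        simpa using mul_right_cancel h1.symm
      have hπγ : ∀ v, γ (πh v) = πh v := by
        intro v
        rw [hπ, map_prod]
        have : ∀ k, γ ((γ ^ k) v) = (γ ^ (k + 1)) v := by
          intro k; rw [pow_succ', MulAut.mul_apply]
        simp_rw [this]
        rw [hshift, ← hπ]
      have hπα : ∀ v, α (πh v) = πh (α v) := by
        intro v
        rw [hπ, hπ, map_prod]
        congr 1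
        funext k
        exact happly α (γ ^ k) (hcomm.pow_right k) v
      have hπfixed : ∀ s, γ s = s → πh s = s ^ m := by
        intro s hs
        rw [hπ]
        have : ∀ k ∈ Finset.range m, (γ ^ k) s = s := by
          intro k _
          rw [mulequiv_pow_iterate]
          exact Function.iterate_fixed hs k
        rw [Finset.prod_congr rfl this, Finset.prod_const, Finset.card_range]
      set K := πh.ker with hKdef
      have hKα : ∀ v ∈ K, α v ∈ K := by
        intro v hv
        rw [MonoidHom.mem_ker] at hv ⊢
        rw [← hπα, hv, map_one]
      have hKα' : ∀ v ∈ K, α.symm v ∈ K := by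
        intro v hv
        rw [MonoidHom.mem_ker] at hv ⊢
        have : α (πh (α.symm v)) = 1 := by rw [hπα, α.apply_symm_apply, hv]
        have := congrArg α.symm this
        rwa [α.symm_apply_apply, map_one] at this
      have hKbot : K = ⊥ := by
        set fK := ⇑(resAut α K hKα hKα') with hfKdef
        have hfKp : fK^[p] = id := by
          funext x
          rw [hfKdef, ← mulequiv_pow_iterate]
          apply Subtype.ext
          rw [resAut_pow_coe]
          exact hαv _
        have hcount := counting_aux hp fK hfKp
        have hfixcard : Nat.card {x : ↥K // fK x = x} = 1 := by
          rw [Nat.card_eq_one_iff_unique]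
          constructor
          · constructor
            intro x y
            have hone : ∀ z : {x : ↥K // fK x = x}, ((z : ↥K) : V) = 1 := by
              intro z
              have hz : α ((z : ↥K) : V) = ((z : ↥K) : V) := congrArg Subtype.val z.2
              have hγz : γ ((z : ↥K) : V) = ((z : ↥K) : V) := hfix _ hz
              have hπz : πh ((z : ↥K) : V) = ((z : ↥K) : V) ^ m := hπfixed _ hγz
              have hker : πh ((z : ↥K) : V) = 1 := (z : ↥K).2
              exact pgroup_coprime_eq_one hp hV hγcop (by rw [← hπz, hker])
            apply Subtype.ext; apply Subtype.ext
            rw [hone x, hone y]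
          · have h1 : fK ⟨1, K.one_mem⟩ = ⟨1, K.one_mem⟩ := by
              apply Subtype.ext
              show α (1 : V) = (1 : V)
              exact map_one α
            exact ⟨⟨⟨1, K.one_mem⟩, h1⟩⟩
        rw [hfixcard] at hcount
        have hdvd : Nat.card ↥K ∣ p ^ nV := hnV ▸ Subgroup.card_subgroup_dvd_card K
        obtain ⟨j, hj, hje⟩ := (Nat.dvd_prime_pow hp).mp hdvd
        rcases Nat.eq_zero_or_pos j with rfl | hjpos
        · rw [pow_zero] at hje
          exact Subgroup.card_eq_one.mp hje
        · exfalso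
          have hpdvd : p ∣ Nat.card ↥K := hje ▸ dvd_pow_self p hjpos.ne'
          have h01 : (0 : ℕ) ≡ 1 [MOD p] := (Nat.modEq_zero_iff_dvd.mpr hpdvd).symm.trans hcount
          have hd1 : p ∣ 1 := by simpa using (Nat.modEq_iff_dvd' (Nat.zero_le 1)).mp h01
          exact hp.one_lt.ne' (Nat.dvd_one.mp hd1)
      -- conclude the abelian case
      intro v
      set e := Nat.card V with hedef
      have he : 0 < e := Nat.card_pos
      have hme : Nat.Coprime m e := by rw [hnV]; exact hγcop.pow_right nV
      set m' := m ^ (e.totient - 1) with hm'def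
      have hm'1 : 1 ≤ m * m' := by
        have : 1 ≤ m := Nat.one_le_iff_ne_zero.mpr hm0
        have : 1 ≤ m' := Nat.one_le_pow _ _ (Nat.pos_of_ne_zero hm0)
        nlinarith [Nat.one_le_iff_ne_zero.mpr hm0]
      have hmm' : m * m' ≡ 1 [MOD e] := by
        have ht : 0 < e.totient := Nat.totient_pos.mpr he
        have : m * m' = m ^ e.totient := by
          rw [hm'def, ← pow_succ']
          congr 1
          omega
        rw [this]
        exact Nat.ModEq.pow_totient hme
      have hdvd : e ∣ m * m' - 1 := (Nat.modEq_iff_dvd' hm'1).mp hmm'.symm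
      set t := (πh v) ^ m' with htdef
      have hγt : γ t = t := by rw [htdef, map_pow, hπγ]
      have hx1 : (πh v) ^ (m * m' - 1) = 1 := by
        obtain ⟨c, hc⟩ := hdvd
        rw [hc, pow_mul]
        rw [hedef] at *
        rw [pow_card_eq_one', one_pow]
      have hkK : t⁻¹ * v ∈ K := by
        rw [MonoidHom.mem_ker, map_mul, map_inv]
        have h1 : πh t = t ^ m := hπfixed t hγt
        have h2 : t ^ m = (πh v) ^ (m' * m) := by rw [htdef, ← pow_mul]
        have h3 : (πh v) ^ (m' * m) = πh v := by
          rw [mul_comm m' m]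
          have : m * m' = (m * m' - 1) + 1 := by omega
          rw [this, pow_succ, hx1, one_mul]
        rw [h1, h2, h3, inv_mul_cancel]
      rw [hKbot, Subgroup.mem_bot] at hkK
      have hvt : v = t := by
        have := congrArg (fun z => t * z) hkK
        simpa [mul_assoc] using this
      rw [hvt]
      exact hγt
    · -- nonabelian case
      push_neg at habel
      obtain ⟨x0, y0, hxy0⟩ := habel
      set Z := Subgroup.center V with hZdef
      have hZne : Z ≠ ⊤ := by
        intro h
        have hy : y0 ∈ Z := by rw [h]; trivial
        exact hxy0 (Subgroup.mem_center_iff.mp hy x0)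
      -- every automorphism preserves the center
      have hcen : ∀ (e : V ≃* V), ∀ v ∈ Z, e v ∈ Z := by
        intro e v hv
        rw [hZdef, Subgroup.mem_center_iff] at hv ⊢
        intro g
        calc g * e v = e (e.symm g) * e v := by rw [e.apply_symm_apply]
          _ = e (e.symm g * v) := (map_mul e _ _).symm
          _ = e (v * e.symm g) := by rw [hv (e.symm g)]
          _ = e v * g := by rw [map_mul, e.apply_symm_apply]
      haveI hZnontriv : Nontrivial ↥Z := hV.center_nontrivial
      have hZcard : Nat.card ↥Z < Nat.card V := by
        have hdv := Subgroup.card_subgroup_dvd_card Z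
        have hne : Nat.card ↥Z ≠ Nat.card V := fun h => hZne (Subgroup.eq_top_of_card_eq Z h)
        exact lt_of_le_of_ne (Nat.le_of_dvd Nat.card_pos hdv) hne
      -- a sub-lemma: γ fixes any ⟨α,γ⟩-invariant proper subgroup pointwise
      have hsub : ∀ (H : Subgroup V), Nat.card ↥H < Nat.card V →
          (∀ v ∈ H, α v ∈ H) → (∀ v ∈ H, α.symm v ∈ H) →
          (∀ v ∈ H, γ v ∈ H) → (∀ v ∈ H, γ.symm v ∈ H) → ∀ v ∈ H, γ v = v := by
        intro H hHcard hHα hHα' hHγ hHγ'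
        set αH := resAut α H hHα hHα' with hαHdef
        set γH := resAut γ H hHγ hHγ' with hγHdef
        have hαHp : αH ^ p = 1 := by
          apply DFunLike.ext
          intro x
          apply Subtype.ext
          rw [hαHdef, resAut_pow_coe]
          exact hαv _
        have hγHm : γH ^ m = 1 := by
          apply DFunLike.ext
          intro x
          apply Subtype.ext
          rw [hγHdef, resAut_pow_coe]
          exact hγmv _
        have hγHcop : (orderOf γH).Coprime p :=
          Nat.Coprime.coprime_dvd_left (orderOf_dvd_of_pow_eq_one hγHm) hγcop
        have hcommH : Commute αH γH := by
          apply DFunLike.ext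
          intro x
          apply Subtype.ext
          show α (γ (x : V)) = γ (α (x : V))
          exact hcm x
        have hfixH : ∀ x : ↥H, αH x = x → γH x = x := by
          intro x hx
          apply Subtype.ext
          exact hfix (x : V) (congrArg Subtype.val hx)
        have := ih ↥H (by omega) (hV.to_subgroup H) αH γH hαHp hγHcop hcommH hfixH
        intro v hv
        exact congrArg Subtype.val (this ⟨v, hv⟩)
      -- γ fixes the center pointwise
      have hγZfix : ∀ v ∈ Z, γ v = v :=
        hsub Z hZcard (hcen α) (hcen α.symm) (hcen γ) (hcen γ.symm)
      -- the subgroup V₀ = {v | v⁻¹ * α v ∈ Z}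
      have hcenput : ∀ (z : V), z ∈ Z → ∀ g : V, g * z = z * g := fun z hz g =>
        Subgroup.mem_center_iff.mp hz g
      set V₀ : Subgroup V :=
        { carrier := {v | v⁻¹ * α v ∈ Z}
          one_mem' := by simpa using Z.one_mem
          mul_mem' := by
            intro a b ha hb
            simp only [Set.mem_setOf_eq] at ha hb ⊢
            have hzb : b⁻¹ * (a⁻¹ * α a) * b = a⁻¹ * α a := by
              rw [mul_assoc, ← hcenput _ ha b]
              group
            have key : (a*b)⁻¹ * α (a*b) = (b⁻¹ * (a⁻¹ * α a) * b) * (b⁻¹ * α b) := by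
              rw [map_mul]
              group
            rw [key, hzb]
            exact mul_mem ha hb
          inv_mem' := by
            intro a ha
            simp only [Set.mem_setOf_eq] at ha ⊢
            have key : a⁻¹⁻¹ * α a⁻¹ = a * (a⁻¹ * α a)⁻¹ * a⁻¹ := by
              rw [map_inv]
              group
            have hz : a * (a⁻¹ * α a)⁻¹ * a⁻¹ = (a⁻¹ * α a)⁻¹ := by
              rw [hcenput _ (inv_mem ha) a]
              group
            rw [key, hz]
            exact inv_mem ha } with hV₀def
      have hmemV₀ : ∀ v : V, v ∈ V₀ ↔ v⁻¹ * α v ∈ Z := fun v => Iff.rfl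
      by_cases hV₀top : V₀ = ⊤
      · -- quadratic case : α v = v·z with z central
        intro v
        have hζ : ∀ w : V, w⁻¹ * α w ∈ Z := by
          intro w
          rw [← hmemV₀]
          rw [hV₀top]
          trivial
        set z := v⁻¹ * α v with hzv
        have hz : z ∈ Z := hζ v
        have hαv' : α v = v * z := by rw [hzv]; group
        set k := γ v * v⁻¹ with hk
        have hαk : α k = k := by
          have h1 : α (γ v) = γ (α v) := hcm v
          have h2 : γ (α v) = γ v * z := by rw [hαv', map_mul, hγZfix z hz]
          rw [hk, map_mul, map_inv, h1, h2, hαv']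
          group
        have hγk : γ k = k := hfix k hαk
        have hγv' : γ v = k * v := by rw [hk]; group
        have hiter : ∀ j : ℕ, (γ ^ j) v = k ^ j * v := by
          intro j
          induction j with
          | zero => simp
          | succ j ihj =>
            rw [pow_succ', MulAut.mul_apply, ihj, map_mul, map_pow, hγk, hγv']
            group
        have hkm : k ^ m = 1 := by
          have h := hiter m
          rw [hγmv] at h
          have h1 : k ^ m * v = 1 * v := by rw [one_mul, ← h]
          exact mul_right_cancel h1
        have hk1 : k = 1 := pgroup_coprime_eq_one hp hV hγcop hkm
        rw [hγv', hk1, one_mul]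
      · -- quotient case
        have hαV₀ : ∀ v ∈ V₀, α v ∈ V₀ := by
          intro v hv
          rw [hmemV₀] at hv ⊢
          have : (α v)⁻¹ * α (α v) = α (v⁻¹ * α v) := by rw [map_mul, map_inv]
          rw [this]
          exact hcen α _ hv
        have hαV₀' : ∀ v ∈ V₀, α.symm v ∈ V₀ := by
          intro v hv
          rw [hmemV₀] at hv ⊢
          have : (α.symm v)⁻¹ * α (α.symm v) = α.symm (v⁻¹ * α v) := by
            rw [map_mul, map_inv, α.apply_symm_apply, α.symm_apply_apply]
          rw [this]
          exact hcen α.symm _ hv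
        have hcm' : ∀ v, α (γ.symm v) = γ.symm (α v) := by
          intro v
          apply γ.injective
          rw [γ.apply_symm_apply, ← hcm, γ.apply_symm_apply]
        have hγV₀ : ∀ v ∈ V₀, γ v ∈ V₀ := by
          intro v hv
          rw [hmemV₀] at hv ⊢
          have : (γ v)⁻¹ * α (γ v) = γ (v⁻¹ * α v) := by
            rw [hcm v, map_mul, map_inv]
          rw [this]
          exact hcen γ _ hv
        have hγV₀' : ∀ v ∈ V₀, γ.symm v ∈ V₀ := by
          intro v hv
          rw [hmemV₀] at hv ⊢
          have : (γ.symm v)⁻¹ * α (γ.symm v) = γ.symm (v⁻¹ * α v) := by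
            rw [hcm' v, map_mul, map_inv]
          rw [this]
          exact hcen γ.symm _ hv
        have hV₀card : Nat.card ↥V₀ < Nat.card V := by
          have hdv := Subgroup.card_subgroup_dvd_card V₀
          have hne : Nat.card ↥V₀ ≠ Nat.card V := fun h => hV₀top (Subgroup.eq_top_of_card_eq V₀ h)
          exact lt_of_le_of_ne (Nat.le_of_dvd Nat.card_pos hdv) hne
        have hfixV₀ : ∀ v ∈ V₀, γ v = v := hsub V₀ hV₀card hαV₀ hαV₀' hγV₀ hγV₀'
        -- the quotient V ⧸ Z
        have hZmapα : Z.map α.toMonoidHom = Z := by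
          apply le_antisymm
          · rintro _ ⟨v, hv, rfl⟩
            exact hcen α v hv
          · intro v hv
            exact ⟨α.symm v, hcen α.symm v hv, α.apply_symm_apply v⟩
        have hZmapγ : Z.map γ.toMonoidHom = Z := by
          apply le_antisymm
          · rintro _ ⟨v, hv, rfl⟩
            exact hcen γ v hv
          · intro v hv
            exact ⟨γ.symm v, hcen γ.symm v hv, γ.apply_symm_apply v⟩
        set αbar := QuotientGroup.congr Z Z α hZmapα with hαbardef
        set γbar := QuotientGroup.congr Z Z γ hZmapγ with hγbardef
        have hαbarmk : ∀ v : V, αbar (QuotientGroup.mk v) = QuotientGroup.mk (α v) :=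
          fun v => rfl
        have hγbarmk : ∀ v : V, γbar (QuotientGroup.mk v) = QuotientGroup.mk (γ v) :=
          fun v => rfl
        have hcardbar : Nat.card (V ⧸ Z) < Nat.card V := by
          have hq := Subgroup.card_eq_card_quotient_mul_card_subgroup Z
          have h2 : 1 < Nat.card ↥Z := Finite.one_lt_card_iff_nontrivial.mpr hZnontriv
          have hbpos : 0 < Nat.card (V ⧸ Z) := Nat.card_pos
          calc Nat.card (V ⧸ Z) < Nat.card (V ⧸ Z) * Nat.card ↥Z :=
                (Nat.lt_mul_iff_one_lt_right hbpos).mpr h2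
            _ = Nat.card V := hq.symm
        have hαbarp : αbar ^ p = 1 := by
          apply DFunLike.ext
          intro x
          refine QuotientGroup.induction_on x ?_
          intro v
          calc (αbar ^ p) (QuotientGroup.mk v) = QuotientGroup.mk ((α ^ p) v) :=
                pow_comm_apply α αbar _ hαbarmk p v
            _ = (1 : MulAut (V ⧸ Z)) (QuotientGroup.mk v) := by rw [hαv v]; rfl
        have hγbarm : γbar ^ m = 1 := by
          apply DFunLike.ext
          intro x
          refine QuotientGroup.induction_on x ?_
          intro v
          calc (γbar ^ m) (QuotientGroup.mk v) = QuotientGroup.mk ((γ ^ m) v) :=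
                pow_comm_apply γ γbar _ hγbarmk m v
            _ = (1 : MulAut (V ⧸ Z)) (QuotientGroup.mk v) := by rw [hγmv v]; rfl
        have hγbarcop : (orderOf γbar).Coprime p :=
          Nat.Coprime.coprime_dvd_left (orderOf_dvd_of_pow_eq_one hγbarm) hγcop
        have hcommbar : Commute αbar γbar := by
          show αbar * γbar = γbar * αbar
          apply DFunLike.ext
          intro x
          refine QuotientGroup.induction_on x ?_
          intro v
          rw [MulAut.mul_apply, MulAut.mul_apply, hγbarmk, hαbarmk, hαbarmk, hγbarmk, hcm]
        have hfixbar : ∀ x : V ⧸ Z, αbar x = x → γbar x = x := by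
          intro x
          refine QuotientGroup.induction_on x ?_
          intro v hx
          rw [hαbarmk] at hx
          have h1 : (α v)⁻¹ * v ∈ Z := (QuotientGroup.eq).mp hx
          have hZv : v⁻¹ * α v ∈ Z := by simpa using inv_mem h1
          have hvV₀ : v ∈ V₀ := (hmemV₀ v).mpr hZv
          rw [hγbarmk, hfixV₀ v hvV₀]
        have hVbarP : IsPGroup p (V ⧸ Z) := hV.to_quotient Z
        have hγbarfix := ih (V ⧸ Z) (by omega) hVbarP αbar γbar hαbarp hγbarcop hcommbar hfixbar
        intro v
        have hmkγ : (QuotientGroup.mk (γ v) : V ⧸ Z) = QuotientGroup.mk v := by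
          rw [← hγbarmk v]
          exact hγbarfix _
        have h1 : (γ v)⁻¹ * v ∈ Z := (QuotientGroup.eq).mp hmkγ
        have hℓZ : v⁻¹ * γ v ∈ Z := by simpa using inv_mem h1
        set ℓ := v⁻¹ * γ v with hℓdef
        have hγℓ : γ ℓ = ℓ := hγZfix ℓ hℓZ
        have hγv' : γ v = v * ℓ := by rw [hℓdef]; group
        have hiter : ∀ j : ℕ, (γ ^ j) v = v * ℓ ^ j := by
          intro j
          induction j with
          | zero => simp
          | succ j ihj =>
            rw [pow_succ', MulAut.mul_apply, ihj, map_mul, map_pow, hγℓ, hγv']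
            group
        have hℓm : ℓ ^ m = 1 := by
          have h := hiter m
          rw [hγmv v] at h
          have h1' : v * ℓ ^ m = v * 1 := by rw [mul_one, ← h]
          exact mul_left_cancel h1'
        have hℓ1 : ℓ = 1 := pgroup_coprime_eq_one hp hV hγcop hℓm
        rw [hγv', hℓ1, mul_one]

open Pointwise
open scoped commutatorElement

lemma mem_normalizer_of_map_conj_eq {X : Type*} [Group X] {H : Subgroup X} {b : X}
    (h : H.map (MulAut.conj b).toMonoidHom = H) : b ∈ Subgroup.normalizer (H : Set X) := by
  rw [Subgroup.mem_normalizer_iff]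
  intro x
  constructor
  · intro hx
    have : (MulAut.conj b).toMonoidHom x ∈ H.map (MulAut.conj b).toMonoidHom :=
      Subgroup.mem_map_of_mem _ hx
    rw [h] at this
    simpa [MulAut.conj] using this
  · intro hx
    rw [← h] at hx
    obtain ⟨y, hy, hxy⟩ := hx
    have : y = x := by
      have h2 : b * y * b⁻¹ = b * x * b⁻¹ := by simpa [MulAut.conj] using hxy
      exact mul_left_cancel (mul_right_cancel h2)
    rwa [← this]

lemma map_conj_eq_of_mem_normalizer {X : Type*} [Group X] {H : Subgroup X} {b : X}
    (hb : b ∈ Subgroup.normalizer (H : Set X)) : H.map (MulAut.conj b).toMonoidHom = H := by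
  have hiff := Subgroup.mem_normalizer_iff.mp hb
  apply le_antisymm
  · rintro _ ⟨y, hy, rfl⟩
    simpa [MulAut.conj] using (hiff y).mp hy
  · intro x hx
    refine ⟨b⁻¹ * x * b, ?_, ?_⟩
    · apply (hiff (b⁻¹ * x * b)).mpr
      have : b * (b⁻¹ * x * b) * b⁻¹ = x := by group
      rwa [this]
    · simp [MulAut.conj]
      group

lemma exists_invariant_sylow {p q : ℕ} (hp : p.Prime) (hq : q.Prime) {X : Type*} [Group X]
    [Finite X] (A Q : Subgroup X) (hA : IsPGroup p ↥A) (hAn : A ≤ Subgroup.normalizer (Q : Set X))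
    (hQcop : ¬ p ∣ Nat.card ↥Q) :
    ∃ S : Subgroup X, S ≤ Q ∧ A ≤ Subgroup.normalizer (S : Set X) ∧ IsPGroup q ↥S ∧
      Nat.card ↥S = q ^ ((Nat.card ↥Q).factorization q) := by
  haveI : Fact q.Prime := ⟨hq⟩
  haveI : Fact p.Prime := ⟨hp⟩
  -- conjugation action of ↥A on ↥Q
  have hconjmem : ∀ (a : ↥A) (x : ↥Q), (a : X) * (x : X) * (a : X)⁻¹ ∈ Q := fun a x =>
    (Subgroup.mem_normalizer_iff.mp (hAn a.2) (x : X)).mp x.2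
  letI : SMul ↥A ↥Q := ⟨fun a x => ⟨(a : X) * (x : X) * (a : X)⁻¹, hconjmem a x⟩⟩
  have hsmul_def : ∀ (a : ↥A) (x : ↥Q), ((a • x : ↥Q) : X) = (a : X) * (x : X) * (a : X)⁻¹ :=
    fun _ _ => rfl
  letI : MulAction ↥A ↥Q :=
    { one_smul := fun x => Subtype.ext (by
        show ((1 : ↥A) : X) * (x : X) * ((1 : ↥A) : X)⁻¹ = (x : X)
        push_cast
        group)
      mul_smul := fun a b x => Subtype.ext (by
        show ((a * b : ↥A) : X) * (x : X) * ((a * b : ↥A) : X)⁻¹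
            = (a : X) * ((b : X) * (x : X) * (b : X)⁻¹) * (a : X)⁻¹
        push_cast
        group) }
  letI : MulDistribMulAction ↥A ↥Q :=
    { smul_mul := fun a x y => Subtype.ext (by
        show (a : X) * ((x * y : ↥Q) : X) * (a : X)⁻¹
            = ((a : X) * (x : X) * (a : X)⁻¹) * ((a : X) * (y : X) * (a : X)⁻¹)
        push_cast
        group)
      smul_one := fun a => Subtype.ext (by
        show (a : X) * ((1 : ↥Q) : X) * (a : X)⁻¹ = ((1 : ↥Q) : X)
        push_cast
        group) }
  have hfin : Finite (Sylow q ↥Q) := inferInstance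
  have hnd : ¬ p ∣ Nat.card (Sylow q ↥Q) := by
    intro hdvd
    obtain ⟨P⟩ := (inferInstance : Nonempty (Sylow q ↥Q))
    have h1 : Nat.card (Sylow q ↥Q) ∣ (P : Subgroup ↥Q).index := P.card_dvd_index
    have h2 : (P : Subgroup ↥Q).index ∣ Nat.card ↥Q := Subgroup.index_dvd_card _
    exact hQcop (hdvd.trans (h1.trans h2))
  obtain ⟨S0, hS0⟩ := hA.nonempty_fixed_point_of_prime_not_dvd_card (Sylow q ↥Q) hnd
  have hS0fix : ∀ g : ↥A, g • S0 = S0 := fun g => hS0 g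
  refine ⟨(S0 : Subgroup ↥Q).map Q.subtype, Subgroup.map_subtype_le _, ?_, ?_, ?_⟩
  · -- A normalizes
    intro b hb
    rw [Subgroup.mem_normalizer_iff]
    intro x
    constructor
    · rintro ⟨y, hy, rfl⟩
      have h1 : (⟨b, hb⟩ : ↥A) • y ∈ (⟨b, hb⟩ : ↥A) • (S0 : Subgroup ↥Q) :=
        Subgroup.smul_mem_pointwise_smul y _ _ hy
      have h2 : ((⟨b, hb⟩ : ↥A) • S0 : Sylow q ↥Q) = S0 := hS0fix _
      have h3 : ((⟨b, hb⟩ : ↥A) • (S0 : Subgroup ↥Q)) = (S0 : Subgroup ↥Q) := by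
        rw [← Sylow.pointwise_smul_def, h2]
      rw [h3] at h1
      exact ⟨_, h1, rfl⟩
    · rintro hx
      obtain ⟨y, hy, hxy⟩ := hx
      have h1 : (⟨b, hb⟩ : ↥A)⁻¹ • y ∈ (⟨b, hb⟩ : ↥A)⁻¹ • (S0 : Subgroup ↥Q) :=
        Subgroup.smul_mem_pointwise_smul y _ _ hy
      have h3 : ((⟨b, hb⟩ : ↥A)⁻¹ • (S0 : Subgroup ↥Q)) = (S0 : Subgroup ↥Q) := by
        rw [← Sylow.pointwise_smul_def, hS0fix _]
      rw [h3] at h1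
      have hxeq : (((⟨b, hb⟩ : ↥A)⁻¹ • y : ↥Q) : X) = x := by
        rw [hsmul_def]
        have hb1 : (((⟨b, hb⟩ : ↥A)⁻¹ : ↥A) : X) = b⁻¹ := rfl
        have hxy' : (y : X) = b * x * b⁻¹ := hxy
        rw [hb1, hxy']
        group
      exact ⟨_, h1, hxeq⟩
  · exact (S0.isPGroup').of_equiv ((S0 : Subgroup ↥Q).equivMapOfInjective Q.subtype
      Q.subtype_injective)
  · rw [← Nat.card_congr ((S0 : Subgroup ↥Q).equivMapOfInjective Q.subtype
      Q.subtype_injective).toEquiv]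
    exact S0.card_eq_multiplicity
/-- Let `V` be a finite `p`-group and `X` a finite group acting faithfully on
`V` (by automorphisms) with `O_p(X) = 1`.  Let `A ≤ X` be elementary abelian of order at
least `p²` with `C_V(A) = C_V(a)` for all nonidentity `a ∈ A`.  Then `A` centralizes every
subgroup `F` of `X` of order prime to `p` which `A` normalizes: `[F,A] = 1`. -/
theorem stmt7 {p : ℕ} (hp : p.Prime) {V X : Type*} [Group V] [Finite V] [Group X] [Finite X]
    [MulDistribMulAction X V]
    (hfaithful : ∀ x : X, (∀ v : V, x • v = v) → x = 1)
    (hVp : IsPGroup p V)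
    (hOp : ∀ N : Subgroup X, N.Normal → IsPGroup p N → N = ⊥)
    (A : Subgroup X)
    (hAexp : ∀ a ∈ A, a ^ p = 1) (hAab : ∀ a ∈ A, ∀ b ∈ A, a * b = b * a)
    (hAcard : p ^ 2 ≤ Nat.card A)
    (hAfix : ∀ a ∈ A, a ≠ 1 →
      {v : V | a • v = v} = {v : V | ∀ b ∈ A, b • v = v}) :
    ∀ F : Subgroup X, Nat.Coprime (Nat.card F) p → A ≤ Subgroup.normalizer (F : Set X) → ⁅F, A⁆ = ⊥ := by
  haveI : Fact p.Prime := ⟨hp⟩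
  haveI : NeZero p := ⟨hp.ne_zero⟩
  intro F hFcop hFn
  -- Step 1 : a p'-element commuting with some a ∈ A and fixing C_V(a) pointwise is trivial
  have step1 : ∀ a c : X, a ∈ A → a * c = c * a → Nat.Coprime (orderOf c) p →
      (∀ v : V, a • v = v → c • v = v) → c = 1 := by
    intro a c ha hac hccop hcfix
    set Φ := MulDistribMulAction.toMulAut X V with hΦdef
    have hαp : (Φ a) ^ p = 1 := by rw [← map_pow, hAexp a ha, map_one]
    have hγcop : Nat.Coprime (orderOf (Φ c)) p :=
      Nat.Coprime.coprime_dvd_left (orderOf_map_dvd Φ c) hccop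
    have hcomm : Commute (Φ a) (Φ c) := by
      show Φ a * Φ c = Φ c * Φ a
      rw [← map_mul, ← map_mul, hac]
    have hfixV : ∀ v : V, (Φ a) v = v → (Φ c) v = v := fun v hv => hcfix v hv
    have htriv := PQ hp (Nat.card V) V le_rfl hVp (Φ a) (Φ c) hαp hγcop hcomm hfixV
    exact hfaithful c (fun v => htriv v)
  -- Step 2
  have step2 : ∀ x ∈ F, ∀ a ∈ A, a ≠ 1 → a * x = x * a → ∀ b ∈ A, b * x = x * b := by
    intro x hx a ha hane hax b hb
    set c := x⁻¹ * (b⁻¹ * x * b) with hcdef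
    have hbxb : b⁻¹ * x * b ∈ F := by
      have hbn' : b⁻¹ ∈ Subgroup.normalizer (F : Set X) := inv_mem (hFn hb)
      have := (Subgroup.mem_normalizer_iff.mp hbn' x).mp hx
      simpa using this
    have hcF : c ∈ F := mul_mem (inv_mem hx) hbxb
    have hccop : Nat.Coprime (orderOf c) p :=
      Nat.Coprime.coprime_dvd_left (Subgroup.orderOf_dvd_natCard F hcF) hFcop
    have h1 : Commute a x := hax
    have h2 : Commute a b := hAab a ha b hb
    have hca : Commute a c := h1.inv_right.mul_right ((h2.inv_right.mul_right h1).mul_right h2)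
    have hcfix : ∀ v : V, a • v = v → c • v = v := by
      intro v hv
      have hWv' := (Set.ext_iff.mp (hAfix a ha hane) v).mp hv
      have hxv : a • (x • v) = x • v := by
        rw [← mul_smul, hax, mul_smul, hv]
      have hWxv := (Set.ext_iff.mp (hAfix a ha hane) (x • v)).mp hxv
      have hbv : b • v = v := hWv' b hb
      have hbixv : b⁻¹ • (x • v) = x • v := hWxv b⁻¹ (inv_mem hb)
      rw [hcdef]
      simp only [mul_smul]
      rw [hbv, hbixv, inv_smul_smul]
    have hc1 : c = 1 := step1 a c ha hca hccop hcfix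
    rw [hcdef] at hc1
    have h2' : b⁻¹ * x * b = x := by
      calc b⁻¹ * x * b = x * (x⁻¹ * (b⁻¹ * x * b)) := by group
        _ = x * 1 := by rw [hc1]
        _ = x := mul_one x
    have h3 : x * b = b * x := by
      calc x * b = b * (b⁻¹ * x * b) := by group
        _ = b * x := by rw [h2']
    exact h3.symm
  have hAp : IsPGroup p ↥A := by
    intro g
    refine ⟨1, ?_⟩
    apply Subtype.ext
    push_cast
    rw [pow_one]
    exact hAexp (g : X) g.2
  -- the key induction
  have key : ∀ n : ℕ, ∀ Q : Subgroup X, Nat.card ↥Q ≤ n → Q ≤ F → A ≤ Subgroup.normalizer (Q : Set X) →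
      ∀ x ∈ Q, ∀ b ∈ A, b * x = x * b := by
    intro n
    induction n with
    | zero =>
      intro Q hc
      exact absurd hc (by have := Nat.card_pos (α := ↥Q); omega)
    | succ n ihn =>
      intro Q hcard hQF hQn
      have hQcop : Nat.Coprime (Nat.card ↥Q) p :=
        Nat.Coprime.coprime_dvd_left (Subgroup.card_dvd_of_le hQF) hFcop
      have hQpos : 0 < Nat.card ↥Q := Nat.card_pos
      have hpndvd : ¬ p ∣ Nat.card ↥Q := by
        intro hd
        have : p ∣ 1 := hQcop ▸ Nat.dvd_gcd hd dvd_rfl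
        exact hp.one_lt.ne' (Nat.dvd_one.mp this)
      by_cases hbad : ∃ q : ℕ, q.Prime ∧ ∃ S : Subgroup X, S ≤ Q ∧ A ≤ Subgroup.normalizer (S : Set X) ∧
          IsPGroup q ↥S ∧ Nat.card ↥S = q ^ ((Nat.card ↥Q).factorization q) ∧
          ¬ (∀ x ∈ S, ∀ b ∈ A, b * x = x * b)
      · obtain ⟨q, hq, S, hSQ, hSn, hSp, hScard, hSbad⟩ := hbad
        exfalso
        apply hSbad
        have hSQeq : S = Q := by
          by_contra hne
          have hdvd := Subgroup.card_dvd_of_le hSQ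
          have hcardne : Nat.card ↥S ≠ Nat.card ↥Q := by
            intro h
            exact hne (Subgroup.eq_of_le_of_card_ge hSQ (le_of_eq h.symm))
          have hlt : Nat.card ↥S < Nat.card ↥Q :=
            lt_of_le_of_ne (Nat.le_of_dvd hQpos hdvd) hcardne
          exact hSbad (ihn S (by omega) (hSQ.trans hQF) hSn)
        rw [hSQeq]
        rw [hSQeq] at hSp
        set Cz := Subgroup.centralizer (A : Set X) with hCzdef
        by_cases hQbot : Q = ⊥
        · intro x hx
          rw [hQbot, Subgroup.mem_bot] at hx
          intro b hb
          rw [hx, mul_one, one_mul]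
        -- the commutator subgroup D = [Q,Q]
        set D := ⁅Q, Q⁆ with hDdef
        have hDQ : D ≤ Q := by
          rw [hDdef, Subgroup.commutator_le]
          intro g1 hg1 g2 hg2
          rw [commutatorElement_def]
          exact mul_mem (mul_mem (mul_mem hg1 hg2) (inv_mem hg1)) (inv_mem hg2)
        have hDn : A ≤ Subgroup.normalizer (D : Set X) := by
          intro b hb
          apply mem_normalizer_of_map_conj_eq
          rw [hDdef, Subgroup.map_commutator, map_conj_eq_of_mem_normalizer (hQn hb)]
        have hDneQ : D ≠ Q := by
          intro hDQ'
          have h1 : ((⊤ : Subgroup ↥Q).map Q.subtype) = Q := by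
            rw [← MonoidHom.range_eq_map, Q.subtype_range]
          have h2 : (commutator ↥Q).map Q.subtype = D := by
            rw [commutator_def, Subgroup.map_commutator, h1, hDdef]
          have h3 : commutator ↥Q = ⊤ :=
            Subgroup.map_injective Q.subtype_injective (by rw [h2, h1, hDQ'])
          haveI : Fact q.Prime := ⟨hq⟩
          have hnil : Group.IsNilpotent ↥Q := hSp.isNilpotent
          have hall : ∀ k, Subgroup.lowerCentralSeries (⊤ : Subgroup ↥Q) k = ⊤ := by
            intro k
            induction k with
            | zero => exact Subgroup.lowerCentralSeries_zero _
            | succ k ihk =>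
              rw [Subgroup.lowerCentralSeries_succ, ihk]
              exact h3
          obtain ⟨k, hk⟩ := Subgroup.nilpotent_iff_lowerCentralSeries.mp hnil
          rw [hall k] at hk
          apply hQbot
          rw [Subgroup.eq_bot_iff_forall]
          intro x hx
          have hmem : (⟨x, hx⟩ : ↥Q) ∈ (⊤ : Subgroup ↥Q) := trivial
          rw [hk, Subgroup.mem_bot] at hmem
          exact congrArg Subtype.val hmem
        have hDlt : Nat.card ↥D < Nat.card ↥Q :=
          lt_of_le_of_ne (Nat.le_of_dvd hQpos (Subgroup.card_dvd_of_le hDQ))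
            (fun h => hDneQ (Subgroup.eq_of_le_of_card_ge hDQ (le_of_eq h.symm)))
        have hDcent : ∀ x ∈ D, ∀ b ∈ A, b * x = x * b := ihn D (by omega) (hDQ.trans hQF) hDn
        -- the subgroup C' of Q of elements centralizing A
        set C' : Subgroup ↥Q := Cz.subgroupOf Q with hC'def
        have hcommC' : ∀ x y : ↥Q, (⁅x, y⁆ : ↥Q) ∈ C' := by
          intro x y
          rw [hC'def, Subgroup.mem_subgroupOf]
          have hco : ((⁅x, y⁆ : ↥Q) : X) = ⁅(x : X), (y : X)⁆ := by
            rw [commutatorElement_def, commutatorElement_def]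
            push_cast
            rfl
          rw [hco]
          have hmemD : ⁅(x : X), (y : X)⁆ ∈ D :=
            Subgroup.commutator_mem_commutator x.2 y.2
          exact Subgroup.mem_centralizer_iff.mpr (fun b hb => hDcent _ hmemD b hb)
        haveI hC'norm : C'.Normal := by
          constructor
          intro nn hn g
          have hkey : g * nn * g⁻¹ = ⁅g, nn⁆ * nn := by rw [commutatorElement_def]; group
          rw [hkey]
          exact mul_mem (hcommC' g nn) hn
        have hQbarcomm : ∀ x y : ↥Q ⧸ C', x * y = y * x := by
          intro x y
          refine QuotientGroup.induction_on x ?_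
          intro xq
          refine QuotientGroup.induction_on y ?_
          intro yq
          rw [← QuotientGroup.mk_mul, ← QuotientGroup.mk_mul, QuotientGroup.eq]
          have hco : (xq * yq)⁻¹ * (yq * xq) = ⁅yq⁻¹, xq⁻¹⁆ := by
            rw [commutatorElement_def]
            group
          rw [hco]
          exact hcommC' _ _
        letI : CommGroup (↥Q ⧸ C') :=
          { (inferInstance : Group (↥Q ⧸ C')) with mul_comm := hQbarcomm }
        -- conjugation endomorphisms
        have hconjmem : ∀ (a : ↥A) (x : ↥Q), (a : X) * (x : X) * (a : X)⁻¹ ∈ Q := fun a x =>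
          (Subgroup.mem_normalizer_iff.mp (hQn a.2) (x : X)).mp x.2
        set conjQ : ↥A →* Monoid.End ↥Q :=
          { toFun := fun a =>
              { toFun := fun x => ⟨(a : X) * (x : X) * (a : X)⁻¹, hconjmem a x⟩
                map_one' := Subtype.ext (by
                  show (a : X) * ((1 : ↥Q) : X) * (a : X)⁻¹ = ((1 : ↥Q) : X)
                  push_cast
                  group)
                map_mul' := fun x y => Subtype.ext (by
                  show (a : X) * ((x * y : ↥Q) : X) * (a : X)⁻¹
                      = ((a : X) * (x : X) * (a : X)⁻¹) * ((a : X) * (y : X) * (a : X)⁻¹)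
                  push_cast
                  group) }
            map_one' := MonoidHom.ext fun x => Subtype.ext (by
              show ((1 : ↥A) : X) * (x : X) * ((1 : ↥A) : X)⁻¹ = (x : X)
              push_cast
              group)
            map_mul' := fun a b => MonoidHom.ext fun x => Subtype.ext (by
              show ((a * b : ↥A) : X) * (x : X) * ((a * b : ↥A) : X)⁻¹
                  = (a : X) * ((b : X) * (x : X) * (b : X)⁻¹) * (a : X)⁻¹
              push_cast
              group) } with hconjQdef
        have hconjQcoe : ∀ (a : ↥A) (x : ↥Q), ((conjQ a x : ↥Q) : X) = (a : X) * (x : X) * (a : X)⁻¹ :=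
          fun a x => rfl
        have hconjC' : ∀ (a : ↥A), ∀ x ∈ C', conjQ a x ∈ C' := by
          intro a x hx
          have hxeq : conjQ a x = x := by
            apply Subtype.ext
            rw [hconjQcoe]
            have hcx := Subgroup.mem_centralizer_iff.mp (Subgroup.mem_subgroupOf.mp hx) ↑a a.2
            rw [hcx]
            group
          rw [hxeq]
          exact hx
        set Ψ : ↥A → (↥Q ⧸ C' →* ↥Q ⧸ C') := fun a =>
          QuotientGroup.map C' C' (conjQ a)
            (fun x hx => Subgroup.mem_comap.mpr (hconjC' a x hx)) with hΨdef
        have hΨmk : ∀ (a : ↥A) (x : ↥Q),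
            Ψ a (QuotientGroup.mk x) = QuotientGroup.mk (conjQ a x) := by
          intro a x
          rw [hΨdef]
          exact QuotientGroup.map_mk _ _ _ _ _
        have hΨmul : ∀ (a b : ↥A) (xb : ↥Q ⧸ C'), Ψ (a * b) xb = Ψ a (Ψ b xb) := by
          intro a b xb
          refine QuotientGroup.induction_on xb ?_
          intro x
          rw [hΨmk, hΨmk, hΨmk, map_mul]
          rfl
        have hΨone : ∀ xb : ↥Q ⧸ C', Ψ 1 xb = xb := by
          intro xb
          refine QuotientGroup.induction_on xb ?_
          intro x
          rw [hΨmk, map_one]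
          rfl
        have hApow : ∀ g : ↥A, g ^ p = 1 := by
          intro g
          apply Subtype.ext
          push_cast
          exact hAexp (g : X) g.2
        -- fixed point freeness on the quotient
        have hfree : ∀ g : ↥A, g ≠ 1 → ∀ xb : ↥Q ⧸ C', Ψ g xb = xb → xb = 1 := by
          intro g hg xb
          refine QuotientGroup.induction_on xb ?_
          intro x hx
          rw [hΨmk] at hx
          have hfS : ∀ y : {y : ↥Q // (QuotientGroup.mk y : ↥Q ⧸ C') = QuotientGroup.mk x},
              (QuotientGroup.mk (conjQ g y.1) : ↥Q ⧸ C') = QuotientGroup.mk x := by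
            intro y
            calc (QuotientGroup.mk (conjQ g y.1) : ↥Q ⧸ C') = Ψ g (QuotientGroup.mk y.1) :=
                  (hΨmk g y.1).symm
              _ = Ψ g (QuotientGroup.mk x) := by rw [y.2]
              _ = QuotientGroup.mk x := by rw [hΨmk]; exact hx
          set fS : {y : ↥Q // (QuotientGroup.mk y : ↥Q ⧸ C') = QuotientGroup.mk x} →
              {y : ↥Q // (QuotientGroup.mk y : ↥Q ⧸ C') = QuotientGroup.mk x} :=
            fun y => ⟨conjQ g y.1, hfS y⟩ with hfSdef
          have hiter : ∀ (k : ℕ) y, (fS^[k] y).1 = ((⇑(conjQ g))^[k]) y.1 := by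
            intro k
            induction k with
            | zero => intro y; rfl
            | succ k ihk =>
              intro y
              rw [Function.iterate_succ_apply, Function.iterate_succ_apply, ihk]
          have hfSp : fS^[p] = id := by
            funext y
            apply Subtype.ext
            rw [hiter p y, ← Monoid.End.coe_pow, ← map_pow, hApow, map_one]
            rfl
          have hcardS : Nat.card {y : ↥Q // (QuotientGroup.mk y : ↥Q ⧸ C') = QuotientGroup.mk x}
              = Nat.card ↥C' := by
            apply Nat.card_congr
            exact
              { toFun := fun y => ⟨x⁻¹ * y.1, (QuotientGroup.eq).mp y.2.symm⟩
                invFun := fun c => ⟨x * c.1, by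
                  rw [eq_comm, QuotientGroup.eq]
                  simpa using c.2⟩
                left_inv := fun y => Subtype.ext (by simp)
                right_inv := fun c => Subtype.ext (by simp) }
          have hnd : ¬ p ∣ Nat.card {y : ↥Q // (QuotientGroup.mk y : ↥Q ⧸ C') = QuotientGroup.mk x} := by
            rw [hcardS]
            intro hd
            exact hpndvd (hd.trans (Subgroup.card_subgroup_dvd_card C'))
          obtain ⟨y, hy⟩ := fixedpoint_aux hp fS hfSp hnd
          have hyfix : conjQ g y.1 = y.1 := congrArg Subtype.val hy
          have hyco : ((conjQ g y.1 : ↥Q) : X) = ((y.1 : ↥Q) : X) := congrArg Subtype.val hyfix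
          rw [hconjQcoe] at hyco
          have hycomm : (g : X) * ((y.1 : ↥Q) : X) = ((y.1 : ↥Q) : X) * (g : X) := by
            calc (g : X) * ((y.1 : ↥Q) : X)
                = ((g : X) * ((y.1 : ↥Q) : X) * (g : X)⁻¹) * (g : X) := by group
              _ = ((y.1 : ↥Q) : X) * (g : X) := by rw [hyco]
          have hgne : (g : X) ≠ 1 := fun h => hg (Subtype.ext h)
          have hstep := step2 ((y.1 : ↥Q) : X) (hQF y.1.2) (g : X) g.2 hgne hycomm
          have hyCz : ((y.1 : ↥Q) : X) ∈ Cz :=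
            Subgroup.mem_centralizer_iff.mpr (fun b hb => hstep b hb)
          have hyC' : y.1 ∈ C' := Subgroup.mem_subgroupOf.mpr hyCz
          have hy1 : (QuotientGroup.mk y.1 : ↥Q ⧸ C') = 1 := (QuotientGroup.eq_one_iff _).mpr hyC'
          rw [← y.2]
          exact hy1
        -- two independent elements of A
        have hAcard1 : 1 < Nat.card ↥A := by
          have h2 : 1 < p ^ 2 := Nat.one_lt_pow (by norm_num) hp.one_lt
          omega
        haveI : Nontrivial ↥A := Finite.one_lt_card_iff_nontrivial.mp hAcard1
        obtain ⟨aA, haA⟩ := exists_ne (1 : ↥A)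
        have ha0A : (aA : X) ∈ A := aA.2
        have ha0ne : (aA : X) ≠ 1 := fun h => haA (Subtype.ext h)
        have hordle : orderOf (aA : X) ≤ p :=
          Nat.le_of_dvd hp.pos (orderOf_dvd_of_pow_eq_one (hAexp _ ha0A))
        have hordpos : 0 < orderOf (aA : X) := by
          have : Finite X := inferInstance
          exact orderOf_pos _
        have hnotle : ¬ A ≤ Subgroup.zpowers (aA : X) := by
          intro hle
          have hdd := Subgroup.card_dvd_of_le hle
          rw [Nat.card_zpowers] at hdd
          have hle2 : Nat.card ↥A ≤ orderOf (aA : X) := Nat.le_of_dvd hordpos hdd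
          nlinarith [hp.one_lt]
        obtain ⟨b0, hb0A, hb0z⟩ := SetLike.not_le_iff_exists.mp hnotle
        set bA : ↥A := ⟨b0, hb0A⟩ with hbAdef
        have hb0p : b0 ^ p = 1 := hAexp b0 hb0A
        have hab_ne : ∀ j : ℕ, j < p → (aA : X) * b0 ^ j ≠ 1 := by
          intro j hj habs
          rcases Nat.eq_zero_or_pos j with rfl | hjpos
          · rw [pow_zero, mul_one] at habs
            exact ha0ne habs
          · have hbj : b0 ^ j = (aA : X)⁻¹ := by
              have h := congrArg (fun z => (aA : X)⁻¹ * z) habs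
              simpa [← mul_assoc] using h
            have hjp : ¬ (p ∣ j) := Nat.not_dvd_of_pos_of_lt hjpos hj
            have hjz : ((j : ZMod p)) ≠ 0 := by
              intro h
              exact hjp ((ZMod.natCast_eq_zero_iff j p).mp h)
            set t := (((j : ZMod p))⁻¹).val with htdef
            have hcastt : ((t : ℕ) : ZMod p) = ((j : ZMod p))⁻¹ := by
              rw [htdef]
              exact ZMod.natCast_rightInverse _
            have hmul : ((j * t : ℕ) : ZMod p) = ((1 : ℕ) : ZMod p) := by
              push_cast
              rw [hcastt, mul_inv_cancel₀ hjz]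
            have hmod : (j * t) % p = 1 % p := (ZMod.natCast_eq_natCast_iff _ _ _).mp hmul
            have h1p : 1 % p = 1 := Nat.mod_eq_of_lt hp.one_lt
            have hb0jt : b0 ^ (j * t) = b0 := by
              rw [pow_eq_pow_mod (j * t) hb0p, hmod, h1p, pow_one]
            have : b0 ∈ Subgroup.zpowers (aA : X) := by
              rw [← hb0jt, pow_mul, hbj]
              exact pow_mem (inv_mem (Subgroup.mem_zpowers _)) t
            exact hb0z this
        -- norms
        set ngx : ↥A → (↥Q ⧸ C') → (↥Q ⧸ C') :=
          fun g xb => ∏ k : ZMod p, Ψ (g ^ (k.val)) xb with hngxdef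
        have hn_fix : ∀ (g : ↥A) (xb), Ψ g (ngx g xb) = ngx g xb := by
          intro g xb
          rw [hngxdef]
          rw [map_prod (Ψ g)]
          have h1 : ∀ k : ZMod p, Ψ g (Ψ (g ^ k.val) xb) = Ψ (g ^ ((k + 1).val)) xb := by
            intro k
            rw [← hΨmul, ← pow_succ']
            congr 2
            have hval : (k + 1).val = (k.val + 1) % p := by
              rw [ZMod.val_add, ZMod.val_one]
            rw [hval, ← pow_eq_pow_mod _ (hApow g)]
          rw [Finset.prod_congr rfl (fun k _ => h1 k)]
          exact Fintype.prod_equiv (Equiv.addRight (1 : ZMod p))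
            (fun k => Ψ (g ^ ((k + 1).val)) xb) (fun k => Ψ (g ^ (k.val)) xb) (fun k => rfl)
        have hn_one : ∀ g : ↥A, g ≠ 1 → ∀ xb, ngx g xb = 1 :=
          fun g hg xb => hfree g hg _ (hn_fix g xb)
        -- every element of the quotient has trivial p-th power
        have hxp1 : ∀ xb : ↥Q ⧸ C', xb ^ p = 1 := by
          intro xb
          set Fij : ZMod p → ZMod p → (↥Q ⧸ C') :=
            fun i j => Ψ (aA ^ i.val * bA ^ j.val) xb with hFijdef
          have hABcomm : Commute aA bA := Subtype.ext (hAab _ aA.2 _ bA.2)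
          have h1 : ∀ c : ZMod p, ngx (aA * bA ^ c.val) xb = ∏ k : ZMod p, Fij k (c * k) := by
            intro c
            rw [hngxdef]
            apply Finset.prod_congr rfl
            intro k _
            have hcmk : Commute aA (bA ^ c.val) := hABcomm.pow_right c.val
            rw [hFijdef]
            congr 1
            rw [hcmk.mul_pow]
            congr 1
            rw [← pow_mul, pow_eq_pow_mod (c.val * k.val) (hApow bA)]
            congr 1
            rw [ZMod.val_mul]
          have hF00 : Fij 0 0 = xb := by
            rw [hFijdef]
            show Ψ (aA ^ (0 : ZMod p).val * bA ^ (0 : ZMod p).val) xb = xb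
            rw [ZMod.val_zero, pow_zero, pow_zero, one_mul]
            exact hΨone xb
          have h4 : (∏ _c : ZMod p, Fij 0 0) = xb ^ p := by
            rw [Finset.prod_const, hF00, Finset.card_univ, ZMod.card]
          have h5 : ∀ k : ZMod p, (∏ j : ZMod p, Fij k j) = Ψ (aA ^ k.val) (ngx bA xb) := by
            intro k
            rw [hngxdef, map_prod]
            apply Finset.prod_congr rfl
            intro j _
            rw [hFijdef]
            exact hΨmul _ _ _
          have hbAne : bA ≠ 1 := by
            intro h
            have hb01 : b0 = 1 := congrArg Subtype.val h
            exact hb0z (by rw [hb01]; exact Subgroup.one_mem _)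
          have hnb : ngx bA xb = 1 := hn_one bA hbAne xb
          have h5' : ∀ k : ZMod p, (∏ j : ZMod p, Fij k j) = 1 := by
            intro k
            rw [h5 k, hnb, map_one]
          have habAne : ∀ c : ZMod p, aA * bA ^ c.val ≠ 1 := by
            intro c h
            apply hab_ne c.val (ZMod.val_lt c)
            have hcc := congrArg (Subtype.val : ↥A → X) h
            push_cast at hcc
            exact hcc
          have hLHS : (1 : ↥Q ⧸ C') = ∏ c : ZMod p, ∏ k : ZMod p, Fij k (c * k) := by
            calc (1 : ↥Q ⧸ C') = ∏ _c : ZMod p, (1 : ↥Q ⧸ C') := by rw [Finset.prod_const_one]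
              _ = ∏ c : ZMod p, ngx (aA * bA ^ c.val) xb := by
                  refine Finset.prod_congr rfl ?_
                  intro c _
                  rw [hn_one _ (habAne c)]
              _ = ∏ c : ZMod p, ∏ k : ZMod p, Fij k (c * k) :=
                  Finset.prod_congr rfl (fun c _ => h1 c)
          have hswap : (∏ c : ZMod p, ∏ k : ZMod p, Fij k (c * k))
              = ∏ k : ZMod p, ∏ c : ZMod p, Fij k (c * k) := Finset.prod_comm
          have hk0 : (∏ c : ZMod p, Fij 0 (c * 0)) = xb ^ p := by
            simp_rw [mul_zero]
            exact h4
          have hkne : ∀ k : ZMod p, k ≠ 0 → (∏ c : ZMod p, Fij k (c * k)) = 1 := by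
            intro k hk
            have hre : (∏ c : ZMod p, Fij k (c * k)) = ∏ j : ZMod p, Fij k j :=
              Fintype.prod_equiv (Equiv.mulRight₀ k hk) _ _ (fun c => rfl)
            rw [hre, h5' k]
          have hsplit : (∏ k : ZMod p, ∏ c : ZMod p, Fij k (c * k))
              = (∏ c : ZMod p, Fij 0 (c * 0)) *
                ∏ k ∈ Finset.univ \ {(0 : ZMod p)}, (∏ c : ZMod p, Fij k (c * k)) :=
            Finset.prod_eq_mul_prod_sdiff_singleton_of_mem (Finset.mem_univ 0) _
          have hrest : (∏ k ∈ Finset.univ \ {(0 : ZMod p)}, (∏ c : ZMod p, Fij k (c * k))) = 1 := by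
            apply Finset.prod_eq_one
            intro k hk
            rw [Finset.mem_sdiff, Finset.mem_singleton] at hk
            exact hkne k hk.2
          have hfinal := hLHS.trans (hswap.trans (hsplit.trans (by rw [hk0, hrest, mul_one])))
          exact hfinal.symm
        have hbartriv : ∀ xb : ↥Q ⧸ C', xb = 1 := by
          intro xb
          have hord : orderOf xb ∣ p := orderOf_dvd_of_pow_eq_one (hxp1 xb)
          have hordcard : orderOf xb ∣ Nat.card (↥Q ⧸ C') := orderOf_dvd_natCard xb
          have hqd : Nat.card (↥Q ⧸ C') ∣ Nat.card ↥Q := Subgroup.card_quotient_dvd_card C'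
          rcases (Nat.dvd_prime hp).mp hord with h1 | h1
          · exact orderOf_eq_one_iff.mp h1
          · exfalso
            exact hpndvd ((h1 ▸ hordcard).trans hqd)
        intro x hx b hb
        have hxq : (QuotientGroup.mk (⟨x, hx⟩ : ↥Q) : ↥Q ⧸ C') = 1 := hbartriv _
        have hxC' : (⟨x, hx⟩ : ↥Q) ∈ C' := (QuotientGroup.eq_one_iff _).mp hxq
        have hxCz : x ∈ Cz := Subgroup.mem_subgroupOf.mp hxC'
        exact Subgroup.mem_centralizer_iff.mp hxCz b hb
      · -- all invariant Sylows are centralized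
        push_neg at hbad
        set Cz := Subgroup.centralizer (A : Set X) with hCzdef
        set R := Q ⊓ Cz with hRdef
        have hRQ : R ≤ Q := inf_le_left
        have hRpos : (0:ℕ) < Nat.card ↥R := Nat.card_pos
        have hfact : ∀ q : ℕ, q.Prime → q ^ ((Nat.card ↥Q).factorization q) ∣ Nat.card ↥R := by
          intro q hq
          obtain ⟨S, hSQ, hSn, hSp, hScard⟩ := exists_invariant_sylow hp hq A Q hAp hQn hpndvd
          have hgood := hbad q hq S hSQ hSn hSp hScard
          have hSCz : S ≤ Cz := by
            intro s hs
            exact Subgroup.mem_centralizer_iff.mpr (fun b hb => hgood s hs b hb)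
          have hSR : S ≤ R := le_inf hSQ hSCz
          rw [← hScard]
          exact Subgroup.card_dvd_of_le hSR
        have hQdvdR : Nat.card ↥Q ∣ Nat.card ↥R := by
          rw [← Nat.factorization_le_iff_dvd hQpos.ne' hRpos.ne']
          intro q
          by_cases hq : q.Prime
          · have := hfact q hq
            exact (Nat.Prime.pow_dvd_iff_le_factorization hq hRpos.ne').mp this
          · simp [Nat.factorization_eq_zero_of_not_prime _ hq]
        have hReq : R = Q := Subgroup.eq_of_le_of_card_ge hRQ (Nat.le_of_dvd hRpos hQdvdR)
        intro x hx b hb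
        have hxR : x ∈ R := hReq ▸ hx
        have hxCz : x ∈ Cz := hxR.2
        exact Subgroup.mem_centralizer_iff.mp hxCz b hb
  -- conclusion
  rw [Subgroup.commutator_eq_bot_iff_le_centralizer]
  intro f hf
  exact Subgroup.mem_centralizer_iff.mpr (fun b hb => key (Nat.card ↥F) F le_rfl le_rfl hFn f hf b hb)
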